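/- Let q be a prime power, t ≥ 1, n_1, …, n_t ≥ 1, n_0 ≥ 0, and n = n_1 + … + n_t + n_0. Identify F_q^n with blocks of sizes n_1, …, n_t, n_0 and define σ̄(x) = (σ_1(x̄_1), …, σ_t(x̄_t)) ∈ F_q^t, where σ_i(x̄_i) is the sum in F_q of the entries of the i-th block. Let C ⊆ F_q^n be a perfect code and let C* ⊆ F_q^t be a code with minimum Hamming distance at least 3 such that σ̄(c) ∈ C* for every c ∈ C. Then C* is a perfect code in F_q^t. -/

import Mathlib

/-- A perfect 1-error-correcting code: every word of the ambient space is within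
Hamming distance 1 of exactly one codeword. -/
def IsPerfectCode {ι α : Type*} [Fintype ι] [DecidableEq α] (C : Set (ι → α)) : Prop :=
  ∀ x : ι → α, ∃! c, c ∈ C ∧ hammingDist x c ≤ 1

lemma sigma_dist_le {t n0 : ℕ} {F : Type*} [Field F] [DecidableEq F]
    (nb : Fin t → ℕ) (hnb : ∀ i, 1 ≤ nb i)
    (a b : (Σ i : Fin t, Fin (nb i)) ⊕ Fin n0 → F) :
    hammingDist (fun i => ∑ j : Fin (nb i), a (Sum.inl ⟨i, j⟩))
      (fun i => ∑ j : Fin (nb i), b (Sum.inl ⟨i, j⟩)) ≤ hammingDist a b := by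
  classical
  simp only [hammingDist]
  have hex : ∀ i ∈ Finset.univ.filter
      (fun i => (∑ j : Fin (nb i), a (Sum.inl ⟨i, j⟩)) ≠ ∑ j : Fin (nb i), b (Sum.inl ⟨i, j⟩)),
      ∃ j : Fin (nb i), a (Sum.inl ⟨i, j⟩) ≠ b (Sum.inl ⟨i, j⟩) := by
    intro i hi
    simp only [Finset.mem_filter] at hi
    by_contra h
    push_neg at h
    exact hi.2 (Finset.sum_congr rfl fun j _ => h j)
  apply Finset.card_le_card_of_injOn
    (fun i => if h : ∃ j : Fin (nb i), a (Sum.inl ⟨i, j⟩) ≠ b (Sum.inl ⟨i, j⟩)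
      then Sum.inl ⟨i, h.choose⟩ else Sum.inl ⟨i, ⟨0, hnb i⟩⟩)
  · intro i hi
    have h := hex i hi
    simp only [h, dif_pos, Finset.mem_filter, Finset.mem_univ, true_and]
    exact Finset.mem_coe.2 (Finset.mem_filter.2 ⟨Finset.mem_univ _, h.choose_spec⟩)
  · intro i hi i' hi' heq
    have h := hex i hi
    have h' := hex i' hi'
    simp only [h, h', dif_pos] at heq
    have := congrArg Sigma.fst (Sum.inl.inj heq)
    exact this

theorem stmt_13 {q t n0 : ℕ} (F : Type*) [Field F] [Fintype F] [DecidableEq F]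
    (hq : Fintype.card F = q) (ht : 1 ≤ t)
    (nb : Fin t → ℕ) (hnb : ∀ i, 1 ≤ nb i)
    (C : Set ((Σ i : Fin t, Fin (nb i)) ⊕ Fin n0 → F))
    (hC : IsPerfectCode C)
    (Cstar : Set (Fin t → F))
    (hd : ∀ x ∈ Cstar, ∀ y ∈ Cstar, x ≠ y → 3 ≤ hammingDist x y)
    (hσ : ∀ c ∈ C, (fun i => ∑ j : Fin (nb i), c (Sum.inl ⟨i, j⟩)) ∈ Cstar) :
    IsPerfectCode Cstar := by
  intro x
  classical
  -- lift x to a word X with block sums x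
  set X : (Σ i : Fin t, Fin (nb i)) ⊕ Fin n0 → F :=
    fun v => match v with
      | Sum.inl ⟨i, j⟩ => if j = (⟨0, hnb i⟩ : Fin (nb i)) then x i else 0
      | Sum.inr _ => 0 with hX
  have hσX : (fun i => ∑ j : Fin (nb i), X (Sum.inl ⟨i, j⟩)) = x := by
    funext i
    simp [hX, Finset.sum_ite_eq']
  obtain ⟨c, ⟨hcC, hdc⟩, _⟩ := hC X
  have hmem := hσ c hcC
  have hdist : hammingDist x (fun i => ∑ j : Fin (nb i), c (Sum.inl ⟨i, j⟩)) ≤ 1 := by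
    calc hammingDist x (fun i => ∑ j : Fin (nb i), c (Sum.inl ⟨i, j⟩))
        = hammingDist (fun i => ∑ j : Fin (nb i), X (Sum.inl ⟨i, j⟩))
            (fun i => ∑ j : Fin (nb i), c (Sum.inl ⟨i, j⟩)) := by rw [hσX]
      _ ≤ hammingDist X c := sigma_dist_le nb hnb X c
      _ ≤ 1 := hdc
  refine ⟨_, ⟨hmem, hdist⟩, ?_⟩
  intro y ⟨hy, hxy⟩
  by_contra hne
  have h3 := hd y hy _ hmem hne
  have : hammingDist y (fun i => ∑ j : Fin (nb i), c (Sum.inl ⟨i, j⟩)) ≤ 2 := by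
    calc hammingDist y (fun i => ∑ j : Fin (nb i), c (Sum.inl ⟨i, j⟩))
        ≤ hammingDist y x + hammingDist x _ := hammingDist_triangle _ _ _
      _ ≤ 1 + 1 := Nat.add_le_add (by rwa [hammingDist_comm]) hdist
      _ = 2 := rfl
  omega
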